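/- Let p ∈ ℕ, p ≥ 1, let A ∈ ℝ^{p×p} be skew-symmetric and B ∈ ℝ^{p×p}, and let γ(t) = exp(tS)·[I_p; 0]·exp(−tA) with S = [[2A, −Bᵀ],[B, 0]]. Then for every j ∈ ℕ the Frobenius norm of the j-th derivative of γ is constant in t: for all s, t ∈ ℝ, ‖γ^{(j)}(t)‖_F = ‖γ^{(j)}(s)‖_F. -/

import Mathlib

open Matrix

attribute [local instance] Matrix.frobeniusNormedAddCommGroup Matrix.frobeniusNormedSpace

section aux

variable {E F : Type*} [NormedAddCommGroup E] [NormedSpace ℝ E]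
  [NormedAddCommGroup F] [NormedSpace ℝ F]

lemma clequiv_comp_deriv (e : E ≃L[ℝ] F) (f : ℝ → E) (x : ℝ) :
    deriv (fun y => e (f y)) x = e (deriv f x) := by
  have h : (fun y => e (f y)) = (e : E → F) ∘ f := rfl
  rw [deriv, deriv, h, ContinuousLinearEquiv.comp_fderiv]
  rfl

lemma clequiv_comp_iteratedDeriv (e : E ≃L[ℝ] F) (f : ℝ → E) (n : ℕ) :
    iteratedDeriv n (fun y => e (f y)) = fun x => e (iteratedDeriv n f x) := by
  induction n with
  | zero => simp [iteratedDeriv_zero]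
  | succ n ih =>
    funext x
    rw [iteratedDeriv_succ, ih, clequiv_comp_deriv, iteratedDeriv_succ]

lemma frob_sum_eq_trace {n m : Type*} [Fintype n] [Fintype m] (M : Matrix n m ℝ) :
    ∑ i, ∑ j, ‖M i j‖ ^ (2 : ℝ) = (Mᵀ * M).trace := by
  simp only [Matrix.trace, Matrix.diag, Matrix.mul_apply, Matrix.transpose_apply]
  rw [Finset.sum_comm]
  congr 1; funext i; congr 1; funext j
  rw [Real.rpow_two, Real.norm_eq_abs, sq_abs, sq]

lemma frob_norm_conj {n m : Type*} [Fintype n] [Fintype m] [DecidableEq n] [DecidableEq m]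
    (U : Matrix n n ℝ) (V : Matrix m m ℝ) (hU : Uᵀ * U = 1) (hV : V * Vᵀ = 1)
    (X : Matrix n m ℝ) : ‖U * X * V‖ = ‖X‖ := by
  have h1 : ((U * X * V)ᵀ * (U * X * V)).trace = (Xᵀ * X).trace := by
    have e1 : (U * X * V)ᵀ * (U * X * V) = Vᵀ * (Xᵀ * (X * V)) := by
      rw [Matrix.transpose_mul, Matrix.transpose_mul]
      simp only [Matrix.mul_assoc]
      rw [← Matrix.mul_assoc Uᵀ U, hU, Matrix.one_mul]
    rw [e1, Matrix.trace_mul_comm]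
    simp only [Matrix.mul_assoc]
    rw [hV, Matrix.mul_one]
  rw [Matrix.frobenius_norm_def, Matrix.frobenius_norm_def,
    frob_sum_eq_trace, frob_sum_eq_trace, h1]

end aux

lemma exp_smul_mul_exp_smul {n : Type*} [Fintype n] [DecidableEq n]
    (M : Matrix n n ℝ) (a b : ℝ) :
    NormedSpace.exp (a • M) * NormedSpace.exp (b • M) =
      NormedSpace.exp ((a + b) • M) := by
  rw [add_smul, Matrix.exp_add_of_commute]
  exact ((Commute.refl M).smul_left a).smul_right b

lemma exp_smul_neg_mul {n : Type*} [Fintype n] [DecidableEq n]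
    (M : Matrix n n ℝ) (a : ℝ) :
    NormedSpace.exp ((-a) • M) * NormedSpace.exp (a • M) = 1 := by
  rw [exp_smul_mul_exp_smul, neg_add_cancel, zero_smul, NormedSpace.exp_zero]

noncomputable def conjCLE {n m : Type*} [Fintype n] [Fintype m] [DecidableEq n] [DecidableEq m]
    (U U' : Matrix n n ℝ) (V V' : Matrix m m ℝ)
    (hUU' : U' * U = 1) (hU'U : U * U' = 1) (hVV' : V * V' = 1) (hV'V : V' * V = 1) :
    Matrix n m ℝ ≃L[ℝ] Matrix n m ℝ :=
  LinearEquiv.toContinuousLinearEquiv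
  { toFun := fun X => U * X * V
    invFun := fun X => U' * X * V'
    map_add' := fun X Y => by simp [Matrix.mul_add, Matrix.add_mul]
    map_smul' := fun c X => by simp [Matrix.mul_smul, Matrix.smul_mul]
    left_inv := fun X => by
      simp only [Matrix.mul_assoc]
      rw [hVV', Matrix.mul_one, ← Matrix.mul_assoc, hUU', Matrix.one_mul]
    right_inv := fun X => by
      simp only [Matrix.mul_assoc]
      rw [hV'V, Matrix.mul_one, ← Matrix.mul_assoc, hU'U, Matrix.one_mul] }

/-- The Frobenius norm of every iterated derivative of a Euclidean Stiefel geodesic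
`γ(t) = exp(tS) [I; 0] exp(-tA)`, `S = [[2A, -Bᵀ], [B, 0]]`, is constant in `t`. -/
theorem stiefel_geodesic_iteratedDeriv_norm_constant
    {p : ℕ} (hp : 1 ≤ p)
    (A B : Matrix (Fin p) (Fin p) ℝ) (hA : Aᵀ = -A)
    (S : Matrix (Fin p ⊕ Fin p) (Fin p ⊕ Fin p) ℝ)
    (hS : S = Matrix.fromBlocks (2 • A) (-Bᵀ) B 0)
    (γ : ℝ → Matrix (Fin p ⊕ Fin p) (Fin p) ℝ)
    (hγ : ∀ t : ℝ, γ t =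
      NormedSpace.exp (t • S) * (Matrix.fromRows 1 0 : Matrix (Fin p ⊕ Fin p) (Fin p) ℝ) *
        NormedSpace.exp ((-t) • A)) :
    ∀ (j : ℕ) (s t : ℝ), ‖iteratedDeriv j γ t‖ = ‖iteratedDeriv j γ s‖ := by
  have hSt : Sᵀ = -S := by
    rw [hS, Matrix.fromBlocks_transpose, Matrix.transpose_smul, hA]
    ext (i | i) (j | j) <;>
      simp [Matrix.fromBlocks]
  have key : ∀ (j : ℕ) (t : ℝ), ‖iteratedDeriv j γ t‖ = ‖iteratedDeriv j γ 0‖ := by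
    intro j t
    set U : Matrix (Fin p ⊕ Fin p) (Fin p ⊕ Fin p) ℝ := NormedSpace.exp (t • S) with hUdef
    set U' : Matrix (Fin p ⊕ Fin p) (Fin p ⊕ Fin p) ℝ := NormedSpace.exp ((-t) • S) with hU'def
    set V : Matrix (Fin p) (Fin p) ℝ := NormedSpace.exp ((-t) • A) with hVdef
    set V' : Matrix (Fin p) (Fin p) ℝ := NormedSpace.exp (t • A) with hV'def
    have hUU' : U' * U = 1 := exp_smul_neg_mul S t
    have hU'U : U * U' = 1 := by
      have := exp_smul_neg_mul S (-t)
      rwa [neg_neg] at this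
    have hV'V : V' * V = 1 := by
      have := exp_smul_neg_mul A (-t)
      rwa [neg_neg] at this
    have hVV' : V * V' = 1 := exp_smul_neg_mul A t
    have hUT : Uᵀ = U' := by
      rw [hUdef, hU'def, ← Matrix.exp_transpose]
      congr 1
      rw [Matrix.transpose_smul, hSt, smul_neg, neg_smul]
    have hVT : Vᵀ = V' := by
      rw [hVdef, hV'def, ← Matrix.exp_transpose]
      congr 1
      rw [Matrix.transpose_smul, hA, smul_neg, neg_smul, neg_neg]
    set e := conjCLE U U' V V' hUU' hU'U hVV' hV'V with he
    have hshift : ∀ h : ℝ, γ (t + h) = e (γ h) := by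
      intro h
      show γ (t + h) = U * γ h * V
      rw [hγ (t + h), hγ h]
      have h1 : NormedSpace.exp ((t + h) • S) = U * NormedSpace.exp (h • S) := by
        rw [hUdef, exp_smul_mul_exp_smul]
      have h2 : NormedSpace.exp ((-(t + h)) • A) =
          NormedSpace.exp ((-h) • A) * V := by
        rw [hVdef, exp_smul_mul_exp_smul]
        congr 1
        ring_nf
      rw [h1, h2]
      simp only [Matrix.mul_assoc]
    have h0 : iteratedDeriv j γ t = e (iteratedDeriv j γ 0) := by
      have h1 : iteratedDeriv j (fun z => γ (t + z)) = fun z => iteratedDeriv j γ (t + z) :=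
        iteratedDeriv_comp_const_add j γ t
      have h2 : (fun z => γ (t + z)) = fun z => e (γ z) := funext hshift
      have h3 := clequiv_comp_iteratedDeriv e γ j
      have := congrFun h1 0
      rw [h2, add_zero] at this
      rw [← this]
      exact congrFun h3 0
    rw [h0]
    show ‖U * iteratedDeriv j γ 0 * V‖ = _
    exact frob_norm_conj U V (by rw [hUT]; exact hUU') (by rw [hVT]; exact hVV') _
  intro j s t
  rw [key j t, key j s]
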